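/- Every (k,ε) spectral extractor with input size n = log|N|, output size m = log|M|, and seed size d = log|D| satisfies d ≥ min{n−k, m} + log(1/ε) − O(1) (with constant at most 2, assuming the general extractor lower bound in the remaining edge case k ≥ n−1). -/

import Mathlib

open Finset

/-- There is a set of `t` elements on which `c` takes its largest values. -/
lemma exists_topset {α : Type} [Fintype α] [DecidableEq α] (c : α → ℕ) :
    ∀ t : ℕ, t ≤ Fintype.card α →
      ∃ T : Finset α, T.card = t ∧ ∀ a ∈ T, ∀ b ∉ T, c b ≤ c a := by
  intro t
  induction t with
  | zero => exact fun _ => ⟨∅, by simp⟩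
  | succ t ih =>
    intro ht
    obtain ⟨T, hcard, hprop⟩ := ih (Nat.le_of_succ_le ht)
    have hne : (Tᶜ : Finset α).Nonempty := by
      rw [← Finset.card_pos, Finset.card_compl, hcard]
      omega
    obtain ⟨b, hb, hmax⟩ := Finset.exists_max_image Tᶜ c hne
    have hbT : b ∉ T := by simpa using hb
    refine ⟨insert b T, by rw [Finset.card_insert_of_notMem hbT, hcard], ?_⟩
    intro a ha b' hb'
    have hb'T : b' ∉ T := fun h => hb' (Finset.mem_insert_of_mem h)
    rcases Finset.mem_insert.mp ha with rfl | haT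
    · exact hmax b' (by simpa using hb'T)
    · exact hprop a haT b' hb'T

/-- A top set of size `t` carries at least a `t/|α|` fraction of the total mass. -/
lemma topset_sum {α : Type} [Fintype α] [DecidableEq α] (c : α → ℕ) (T : Finset α)
    (ht : T.Nonempty) (hprop : ∀ a ∈ T, ∀ b ∉ T, c b ≤ c a) :
    T.card * ∑ x, c x ≤ Fintype.card α * ∑ x ∈ T, c x := by
  obtain ⟨a₀, ha₀, hmin⟩ := Finset.exists_min_image T c ht
  have h1 : ∑ x ∈ Tᶜ, c x ≤ Tᶜ.card * c a₀ := by
    simpa using Finset.sum_le_card_nsmul Tᶜ c (c a₀)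
      (fun x hx => hprop a₀ ha₀ x (by simpa using hx))
  have h2 : T.card * c a₀ ≤ ∑ x ∈ T, c x := by
    simpa using Finset.card_nsmul_le_sum T c (c a₀) hmin
  have h3 : ∑ x ∈ T, c x + ∑ x ∈ Tᶜ, c x = ∑ x, c x := Finset.sum_add_sum_compl T c
  have h4 : T.card + Tᶜ.card = Fintype.card α := Finset.card_add_card_compl T
  calc T.card * ∑ x, c x
      = T.card * ∑ x ∈ T, c x + T.card * ∑ x ∈ Tᶜ, c x := by rw [← h3, Nat.mul_add]
    _ ≤ T.card * ∑ x ∈ T, c x + T.card * (Tᶜ.card * c a₀) :=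
        Nat.add_le_add_left (Nat.mul_le_mul_left _ h1) _
    _ = T.card * ∑ x ∈ T, c x + Tᶜ.card * (T.card * c a₀) := by ring
    _ ≤ T.card * ∑ x ∈ T, c x + Tᶜ.card * ∑ x ∈ T, c x :=
        Nat.add_le_add_left (Nat.mul_le_mul_left _ h2) _
    _ = Fintype.card α * ∑ x ∈ T, c x := by rw [← h4]; ring

set_option maxHeartbeats 1000000 in
/-- every (k,ε) spectral extractor with input size `n = log|N|`, output size
`m = log|M|` and seed size `d = log|D|` satisfies
`d ≥ min{n−k, m} + log(1/ε) − 2`.  The remaining edge case `k ≥ n−1`, which in the paper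
is handled by the general lower bound on the seed of extractors, is assumed as the
hypothesis `hedge`. -/
theorem spectral_extractor_long_seed
    {N M D : Type} [Fintype N] [DecidableEq N] [Fintype M] [DecidableEq M]
    [Fintype D] [DecidableEq D] [Nonempty N] [Nonempty D]
    (hM : 1 < Fintype.card M)
    (f : D → N → M) (k ε : ℝ) (hε : 0 < ε) (hk0 : 0 ≤ k)
    (hkn : k ≤ Real.logb 2 (Fintype.card N))
    -- spectral extractor condition λ_max(ψ†∘ψ − τ†∘τ) ≤ 2^k ε/(|M||D|)
    (hspec : ∀ P : N → ℝ,
      (∑ mi : M × D, ((∑ x, if f mi.2 x = mi.1 then P x else 0) / (Fintype.card D)) ^ 2)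
      - (∑ _mi : M × D, ((∑ x, P x) / (Fintype.card M * Fintype.card D)) ^ 2)
      ≤ 2 ^ k * ε / (Fintype.card M * Fintype.card D) * ∑ x, (P x) ^ 2)
    -- edge case k ≥ n − 1: covered by the general extractor seed lower bound
    (hedge : Real.logb 2 (Fintype.card N) - 1 ≤ k →
      Real.logb 2 (Fintype.card D) ≥
        min (Real.logb 2 (Fintype.card N) - k) (Real.logb 2 (Fintype.card M))
          + Real.logb 2 (1 / ε) - 2) :
    Real.logb 2 (Fintype.card D) ≥
      min (Real.logb 2 (Fintype.card N) - k) (Real.logb 2 (Fintype.card M))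
        + Real.logb 2 (1 / ε) - 2 := by
  classical
  obtain ⟨d₁⟩ := ‹Nonempty D›
  -- t = ⌈|M|/2⌉
  set t : ℕ := (Fintype.card M + 1) / 2 with ht_def
  have ht1 : 1 ≤ t := by omega
  have htM : t ≤ Fintype.card M := by omega
  set c : M → ℕ := fun m => (univ.filter fun x => f d₁ x = m).card with hc_def
  obtain ⟨T, hTcard, hTprop⟩ := exists_topset c t htM
  set P : N → ℝ := fun x => if f d₁ x ∈ T then (1 : ℝ) else 0 with hP_def
  set sN : ℕ := (univ.filter fun x => f d₁ x ∈ T).card with hsN_def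
  have hPsum : ∑ x, P x = (sN : ℝ) := by
    simp [hP_def, hsN_def]
  have hPsq : ∑ x, (P x) ^ 2 = (sN : ℝ) := by
    rw [← hPsum]
    refine Finset.sum_congr rfl fun x _ => ?_
    by_cases h : f d₁ x ∈ T <;> simp [hP_def, h]
  -- fiber counting
  have hNsum : Fintype.card N = ∑ m, c m := by
    rw [← Finset.card_univ]
    exact Finset.card_eq_sum_card_fiberwise (fun x _ => Finset.mem_univ (f d₁ x))
  have hsT : sN = ∑ m ∈ T, c m := by
    rw [hsN_def,
      Finset.card_eq_sum_card_fiberwise (f := f d₁) (s := univ.filter fun x => f d₁ x ∈ T) (t := T)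
        (fun x hx => (Finset.mem_filter.mp hx).2)]
    refine Finset.sum_congr rfl fun m hm => ?_
    congr 1
    ext x
    simp only [Finset.mem_filter, Finset.mem_univ, true_and]
    constructor
    · rintro ⟨-, h⟩; exact h
    · intro h; exact ⟨h ▸ hm, h⟩
  have hTne : T.Nonempty := Finset.card_pos.mp (by rw [hTcard]; omega)
  have hkey_count : t * Fintype.card N ≤ Fintype.card M * sN := by
    rw [hNsum, hsT, ← hTcard]
    exact topset_sum c T hTne hTprop
  have hN1 : 1 ≤ Fintype.card N := Fintype.card_pos
  have hsN1 : 1 ≤ sN := by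
    rcases Nat.eq_zero_or_pos sN with h0 | h
    · rw [h0, Nat.mul_zero] at hkey_count
      have : 1 * 1 ≤ t * Fintype.card N := Nat.mul_le_mul ht1 hN1
      omega
    · exact h
  -- real abbreviations
  set Mr : ℝ := (Fintype.card M : ℝ) with hMr_def
  set Dr : ℝ := (Fintype.card D : ℝ) with hDr_def
  set Nr : ℝ := (Fintype.card N : ℝ) with hNr_def
  set tr : ℝ := (t : ℝ) with htr_def
  set s : ℝ := (sN : ℝ) with hs_def
  set E : ℝ := (2 : ℝ) ^ k with hE_def
  clear_value Mr Dr Nr tr s E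
  have hMr2 : (2 : ℝ) ≤ Mr := by rw [hMr_def]; exact_mod_cast hM
  have hDr1 : (1 : ℝ) ≤ Dr := by
    rw [hDr_def]; exact Nat.one_le_cast.mpr Fintype.card_pos
  have hNr1 : (1 : ℝ) ≤ Nr := by rw [hNr_def]; exact_mod_cast hN1
  have htr1 : (1 : ℝ) ≤ tr := by rw [htr_def]; exact_mod_cast ht1
  have hs1 : (1 : ℝ) ≤ s := by rw [hs_def]; exact_mod_cast hsN1
  have hEpos : (0 : ℝ) < E := hE_def ▸ Real.rpow_pos_of_pos (by norm_num) k
  have hMrpos : (0 : ℝ) < Mr := by linarith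
  have hDrpos : (0 : ℝ) < Dr := by linarith
  have htrpos : (0 : ℝ) < tr := by linarith
  have hspos : (0 : ℝ) < s := by linarith
  have hNrpos : (0 : ℝ) < Nr := by linarith
  have htr2 : 2 * tr ≤ Mr + 1 := by
    have h : 2 * t ≤ Fintype.card M + 1 := by omega
    rw [htr_def, hMr_def]; exact_mod_cast h
  have hcount : tr * Nr ≤ Mr * s := by
    rw [htr_def, hMr_def, hNr_def, hs_def]; exact_mod_cast hkey_count
  -- the matrix of conditional counts
  set A : D → M → ℝ := fun i m => ∑ x, if f i x = m then P x else 0 with hA_def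
  have hAsum : ∀ i, ∑ m, A i m = s := by
    intro i
    rw [← hPsum, hA_def, Finset.sum_comm]
    refine Finset.sum_congr rfl fun x _ => ?_
    simp [Finset.sum_ite_eq]
  have hAT : ∀ m ∉ T, A d₁ m = 0 := by
    intro m hm
    refine Finset.sum_eq_zero fun x _ => ?_
    by_cases h : f d₁ x = m
    · rw [if_pos h, hP_def]
      exact if_neg (by rw [h]; exact hm)
    · exact if_neg h
  -- Cauchy–Schwarz bounds
  have hCS : ∀ i, s ^ 2 ≤ Mr * ∑ m, (A i m) ^ 2 := by
    intro i
    rw [hMr_def]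
    have h := sq_sum_le_card_mul_sum_sq (s := (univ : Finset M)) (f := A i)
    rw [hAsum i] at h
    simpa [Finset.card_univ] using h
  have hCSd : s ^ 2 ≤ tr * ∑ m, (A d₁ m) ^ 2 := by
    rw [htr_def]
    have hsum : ∑ m ∈ T, A d₁ m = s := by
      rw [← hAsum d₁]
      exact Finset.sum_subset (Finset.subset_univ T) (fun m _ hm => hAT m hm)
    have h := sq_sum_le_card_mul_sum_sq (s := T) (f := A d₁)
    rw [hsum, hTcard] at h
    refine h.trans ?_
    have hsub : ∑ m ∈ T, (A d₁ m) ^ 2 ≤ ∑ m, (A d₁ m) ^ 2 :=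
      Finset.sum_le_sum_of_subset_of_nonneg (Finset.subset_univ T)
        (fun m _ _ => sq_nonneg _)
    exact mul_le_mul_of_nonneg_left hsub (by positivity)
  -- specialize the spectral condition
  have H := hspec P
  set Q : ℝ := ∑ i, ∑ m, (A i m) ^ 2 with hQ_def
  have Hsum1 : (∑ mi : M × D,
      ((∑ x, if f mi.2 x = mi.1 then P x else 0) / Dr) ^ 2)
      = Q / Dr ^ 2 := by
    rw [hQ_def, Fintype.sum_prod_type, Finset.sum_comm, Finset.sum_div]
    refine Finset.sum_congr rfl fun i _ => ?_
    rw [Finset.sum_div]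
    refine Finset.sum_congr rfl fun m _ => ?_
    simp only [hA_def]
    exact div_pow _ _ 2
  have Hsum2 : (∑ _mi : M × D, ((∑ x, P x) / (Mr * Dr)) ^ 2)
      = s ^ 2 / (Mr * Dr) := by
    rw [hPsum, Finset.sum_const, Finset.card_univ, Fintype.card_prod, nsmul_eq_mul,
      Nat.cast_mul, ← hMr_def, ← hDr_def]
    field_simp
  rw [Hsum1, Hsum2, hPsq] at H
  -- H : Q / Dr ^ 2 - s ^ 2 / (Mr * Dr) ≤ E * ε / (Mr * Dr) * s
  have hQlow : s ^ 2 / tr + (Dr - 1) * (s ^ 2 / Mr) ≤ Q := by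
    have hsplit : Q = (∑ m, (A d₁ m) ^ 2) + ∑ i ∈ univ.erase d₁, ∑ m, (A i m) ^ 2 :=
      (Finset.add_sum_erase univ _ (Finset.mem_univ d₁)).symm
    have h1 : s ^ 2 / tr ≤ ∑ m, (A d₁ m) ^ 2 := by
      rw [div_le_iff₀ htrpos]
      linarith [hCSd]
    have h2 : (Dr - 1) * (s ^ 2 / Mr) ≤ ∑ i ∈ univ.erase d₁, ∑ m, (A i m) ^ 2 := by
      have hb : ∀ i ∈ univ.erase d₁, s ^ 2 / Mr ≤ ∑ m, (A i m) ^ 2 := by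
        intro i _
        rw [div_le_iff₀ hMrpos]
        linarith [hCS i]
      have h := Finset.card_nsmul_le_sum (univ.erase d₁) _ (s ^ 2 / Mr) hb
      rw [Finset.card_erase_of_mem (Finset.mem_univ d₁), Finset.card_univ,
        nsmul_eq_mul] at h
      have hcast : ((Fintype.card D - 1 : ℕ) : ℝ) = Dr - 1 := by
        rw [Nat.cast_sub (Fintype.card_pos (α := D))]
        simp [hDr_def]
      rw [hcast] at h
      exact h
    linarith [hsplit.ge, h1, h2]
  have hQup : Q ≤ (E * ε / (Mr * Dr) * s + s ^ 2 / (Mr * Dr)) * Dr ^ 2 := by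
    rw [← div_le_iff₀ (by positivity : (0:ℝ) < Dr ^ 2)]
    linarith [H]
  have htr0 : tr ≠ 0 := ne_of_gt htrpos
  have hMr0 : Mr ≠ 0 := ne_of_gt hMrpos
  have hDr0 : Dr ≠ 0 := ne_of_gt hDrpos
  have hmain : s ^ 2 / tr + (Dr - 1) * (s ^ 2 / Mr)
      ≤ E * ε * s * Dr / Mr + s ^ 2 * Dr / Mr := by
    refine hQlow.trans (hQup.trans_eq ?_)
    field_simp
  clear_value A
  clear hspec H Hsum1 Hsum2 hQlow hQup hQ_def hCS hCSd hAsum hAT hPsum hPsq Q hA_def A hedge hkn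
  have hclear : Mr * s ^ 2 + tr * (Dr - 1) * s ^ 2
      ≤ tr * (E * ε) * s * Dr + tr * s ^ 2 * Dr := by
    have h := mul_le_mul_of_nonneg_left hmain (le_of_lt (mul_pos hMrpos htrpos))
    calc Mr * s ^ 2 + tr * (Dr - 1) * s ^ 2
        = (Mr * tr) * (s ^ 2 / tr + (Dr - 1) * (s ^ 2 / Mr)) := by field_simp
      _ ≤ (Mr * tr) * (E * ε * s * Dr / Mr + s ^ 2 * Dr / Mr) := h
      _ = tr * (E * ε) * s * Dr + tr * s ^ 2 * Dr := by field_simp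
  have hG1 : s * (Mr - tr) ≤ tr * (E * ε) * Dr := by
    have h2 : (s * (Mr - tr)) * s ≤ (tr * (E * ε) * Dr) * s := by nlinarith [hclear]
    exact le_of_mul_le_mul_right h2 hspos
  have hMt : Mr / 4 ≤ Mr - tr := by linarith
  have hfin : Nr ≤ 4 * (E * ε) * Dr := by
    have h3 : tr * Nr * (Mr - tr) ≤ Mr * s * (Mr - tr) :=
      mul_le_mul_of_nonneg_right hcount (by linarith)
    have h4 : Mr * (s * (Mr - tr)) ≤ Mr * (tr * (E * ε) * Dr) :=
      mul_le_mul_of_nonneg_left hG1 (le_of_lt hMrpos)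
    have h5 : tr * Nr * (Mr / 4) ≤ tr * Nr * (Mr - tr) :=
      mul_le_mul_of_nonneg_left hMt (by positivity)
    have h7 : (tr * Mr) * (Nr / 4) ≤ (tr * Mr) * (E * ε * Dr) := by nlinarith [h3, h4, h5]
    have h8 := le_of_mul_le_mul_left h7 (by positivity : (0:ℝ) < tr * Mr)
    linarith
  -- take logs
  have hlog4 : Real.logb 2 (4 : ℝ) = 2 := by
    rw [show (4 : ℝ) = 2 ^ (2 : ℕ) by norm_num, Real.logb_pow,
      Real.logb_self_eq_one (by norm_num)]
    norm_num
  have hlogE : Real.logb 2 E = k := by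
    rw [hE_def]
    exact Real.logb_rpow (by norm_num) (by norm_num)
  have hmono : Real.logb 2 Nr ≤ Real.logb 2 (4 * (E * ε) * Dr) :=
    Real.logb_le_logb_of_le (by norm_num) hNrpos hfin
  have hexpand : Real.logb 2 (4 * (E * ε) * Dr)
      = 2 + k + Real.logb 2 ε + Real.logb 2 Dr := by
    rw [Real.logb_mul (by positivity) hDr0,
      Real.logb_mul (by norm_num) (by positivity),
      Real.logb_mul (ne_of_gt hEpos) (ne_of_gt hε), hlog4, hlogE]
    ring
  have hinv : Real.logb 2 (1 / ε) = -Real.logb 2 ε := by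
    rw [one_div, Real.logb_inv]
  have hminle : min (Real.logb 2 Nr - k) (Real.logb 2 Mr) ≤ Real.logb 2 Nr - k :=
    min_le_left _ _
  rw [hexpand] at hmono
  rw [ge_iff_le, hinv]
  linarith
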